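/- Let 0 ≤ a ≤ b ≤ 1 and let u, v ∈ W^{1,1}(a,b) be non-decreasing functions with u(a) = v(a), such that for every ρ ≥ 0 the Lebesgue measures agree: Leb({x ∈ (a,b) : u′(x) ≥ ρ}) = Leb({x ∈ (a,b) : v′(x) ≥ ρ}). If moreover u′ is non-decreasing on (a,b), then u(x) ≤ v(x) for every x ∈ [a,b]. -/

import Mathlib

open MeasureTheory Set Filter

lemma aux_level_lt (a b : ℝ) (u' v' : ℝ → ℝ)
    (hlevel : ∀ ρ : ℝ, 0 ≤ ρ →
      volume {x : ℝ | x ∈ Set.Ioo a b ∧ ρ ≤ u' x} =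
        volume {x : ℝ | x ∈ Set.Ioo a b ∧ ρ ≤ v' x})
    (s : ℝ) (hs : 0 ≤ s) :
    volume {x : ℝ | x ∈ Set.Ioo a b ∧ s < u' x} =
      volume {x : ℝ | x ∈ Set.Ioo a b ∧ s < v' x} := by
  have key : ∀ w : ℝ → ℝ, {x : ℝ | x ∈ Set.Ioo a b ∧ s < w x} =
      ⋃ n : ℕ, {x : ℝ | x ∈ Set.Ioo a b ∧ s + 1/(n+1) ≤ w x} := by
    intro w
    ext x
    simp only [Set.mem_iUnion, Set.mem_setOf_eq]
    constructor
    · rintro ⟨hx, hlt⟩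
      obtain ⟨n, hn⟩ := exists_nat_one_div_lt (sub_pos.2 hlt)
      exact ⟨n, hx, by push_cast at hn ⊢; linarith⟩
    · rintro ⟨n, hx, hle⟩
      refine ⟨hx, lt_of_lt_of_le ?_ hle⟩
      have : (0:ℝ) < 1/(n+1) := by positivity
      linarith
  have hmono : ∀ w : ℝ → ℝ,
      Monotone (fun n : ℕ => {x : ℝ | x ∈ Set.Ioo a b ∧ s + 1/(n+1) ≤ w x}) := by
    intro w n m hnm x hx
    refine ⟨hx.1, le_trans (by gcongr <;> exact_mod_cast hnm) hx.2⟩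
  rw [key u', key v', (hmono u').measure_iUnion, (hmono v').measure_iUnion]
  exact iSup_congr fun n => hlevel _ (by positivity)

lemma aux_pospart_eq (a b : ℝ) (u' v' : ℝ → ℝ)
    (hu : IntegrableOn u' (Set.Ioo a b) volume)
    (hv : IntegrableOn v' (Set.Ioo a b) volume)
    (hlevel : ∀ ρ : ℝ, 0 ≤ ρ →
      volume {x : ℝ | x ∈ Set.Ioo a b ∧ ρ ≤ u' x} =
        volume {x : ℝ | x ∈ Set.Ioo a b ∧ ρ ≤ v' x})
    (ρ₀ : ℝ) (hρ₀ : 0 ≤ ρ₀) :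
    ∫ t in Set.Ioo a b, max (u' t - ρ₀) 0 = ∫ t in Set.Ioo a b, max (v' t - ρ₀) 0 := by
  have hIoofin : volume (Set.Ioo a b) < ⊤ := measure_Ioo_lt_top
  have hconst : IntegrableOn (fun _ : ℝ => ρ₀) (Set.Ioo a b) volume :=
    (integrableOn_const_iff).mpr (Or.inr hIoofin)
  have hFu : Integrable (fun t => max (u' t - ρ₀) 0) (volume.restrict (Set.Ioo a b)) :=
    (hu.sub hconst).pos_part
  have hFv : Integrable (fun t => max (v' t - ρ₀) 0) (volume.restrict (Set.Ioo a b)) :=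
    (hv.sub hconst).pos_part
  have hnnu : 0 ≤ᵐ[volume.restrict (Set.Ioo a b)] fun t => max (u' t - ρ₀) 0 :=
    Filter.Eventually.of_forall fun t => le_max_right _ _
  have hnnv : 0 ≤ᵐ[volume.restrict (Set.Ioo a b)] fun t => max (v' t - ρ₀) 0 :=
    Filter.Eventually.of_forall fun t => le_max_right _ _
  rw [hFu.integral_eq_integral_meas_lt hnnu, hFv.integral_eq_integral_meas_lt hnnv]
  refine setIntegral_congr_fun measurableSet_Ioi fun t ht => ?_
  have ht' : (0:ℝ) < t := ht
  rw [measureReal_def, measureReal_def]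
  congr 1
  have hsetu : {x : ℝ | t < max (u' x - ρ₀) 0} = {x : ℝ | ρ₀ + t < u' x} := by
    ext x; simp only [Set.mem_setOf_eq, lt_max_iff]
    constructor
    · rintro (h | h) <;> [linarith; linarith]
    · intro h; left; linarith
  have hsetv : {x : ℝ | t < max (v' x - ρ₀) 0} = {x : ℝ | ρ₀ + t < v' x} := by
    ext x; simp only [Set.mem_setOf_eq, lt_max_iff]
    constructor
    · rintro (h | h) <;> [linarith; linarith]
    · intro h; left; linarith
  rw [hsetu, hsetv, Measure.restrict_apply' measurableSet_Ioo,
    Measure.restrict_apply' measurableSet_Ioo]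
  have h1 : {x : ℝ | ρ₀ + t < u' x} ∩ Set.Ioo a b = {x : ℝ | x ∈ Set.Ioo a b ∧ ρ₀ + t < u' x} := by
    ext x; simp [Set.mem_setOf_eq, and_comm]
  have h2 : {x : ℝ | ρ₀ + t < v' x} ∩ Set.Ioo a b = {x : ℝ | x ∈ Set.Ioo a b ∧ ρ₀ + t < v' x} := by
    ext x; simp [Set.mem_setOf_eq, and_comm]
  rw [h1, h2]
  exact aux_level_lt a b u' v' hlevel _ (by linarith)

/-- If `u, v ∈ W^{1,1}(a,b)` are non-decreasing, `u(a) = v(a)`, their derivatives are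
equimeasurable (`Leb({u' ≥ ρ}) = Leb({v' ≥ ρ})` for all `ρ ≥ 0`), and `u'` is
non-decreasing, then `u ≤ v` on `[a,b]`. -/
theorem statement3
    (a b : ℝ) (ha : 0 ≤ a) (hab : a ≤ b) (hb : b ≤ 1)
    (u v u' v' : ℝ → ℝ)
    (hu_mono : MonotoneOn u (Set.Icc a b))
    (hv_mono : MonotoneOn v (Set.Icc a b))
    (hu_ac : ∀ x ∈ Set.Icc a b, u x = u a + ∫ t in a..x, u' t)
    (hv_ac : ∀ x ∈ Set.Icc a b, v x = v a + ∫ t in a..x, v' t)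
    (hu'int : IntervalIntegrable u' volume a b)
    (hv'int : IntervalIntegrable v' volume a b)
    (huva : u a = v a)
    (hlevel : ∀ ρ : ℝ, 0 ≤ ρ →
      volume {x : ℝ | x ∈ Set.Ioo a b ∧ ρ ≤ u' x} =
        volume {x : ℝ | x ∈ Set.Ioo a b ∧ ρ ≤ v' x})
    (hu'_mono : MonotoneOn u' (Set.Ioo a b)) :
    ∀ x ∈ Set.Icc a b, u x ≤ v x := by
  -- integrability on subintervals
  have Iu : IntegrableOn u' (Set.Ioo a b) volume := (hu'int.1).mono_set Set.Ioo_subset_Ioc_self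
  have Iv : IntegrableOn v' (Set.Ioo a b) volume := (hv'int.1).mono_set Set.Ioo_subset_Ioc_self
  -- u' is nonnegative on (a,b)
  have hu'nn : ∀ t ∈ Set.Ioo a b, 0 ≤ u' t := by
    intro t ht
    by_contra hneg
    push_neg at hneg
    have htmem : t ∈ Set.Icc a b := ⟨ht.1.le, ht.2.le⟩
    have hut : u a ≤ u t := hu_mono ⟨le_rfl, hab⟩ htmem ht.1.le
    have hint : u t = u a + ∫ s in Set.Ioo a t, u' s := by
      rw [hu_ac t htmem, intervalIntegral.integral_of_le ht.1.le,
        MeasureTheory.integral_Ioc_eq_integral_Ioo]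
    have hIat : IntegrableOn u' (Set.Ioo a t) volume :=
      Iu.mono_set (Set.Ioo_subset_Ioo le_rfl ht.2.le)
    have hconst : IntegrableOn (fun _ : ℝ => u' t) (Set.Ioo a t) volume :=
      (integrableOn_const_iff).mpr (Or.inr measure_Ioo_lt_top)
    have hle : ∫ s in Set.Ioo a t, u' s ≤ ∫ s in Set.Ioo a t, u' t := by
      refine setIntegral_mono_on hIat hconst measurableSet_Ioo fun s hs => ?_
      exact hu'_mono ⟨hs.1, hs.2.trans ht.2⟩ ht hs.2.le
    rw [setIntegral_const, Real.volume_real_Ioo, max_eq_left (by linarith [ht.1] : (0:ℝ) ≤ t - a),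
      smul_eq_mul] at hle
    have h0 : 0 ≤ ∫ s in Set.Ioo a t, u' s := by linarith [hint ▸ hut]
    nlinarith [ht.1]
  -- v' is a.e. nonnegative on (a,b)
  have hv'nn : 0 ≤ᵐ[volume.restrict (Set.Ioo a b)] v' := by
    have hvmeas : AEStronglyMeasurable v' (volume.restrict (Set.Ioo a b)) :=
      (Iv : Integrable _ _).aestronglyMeasurable
    obtain ⟨g, hgmeas, hgae⟩ := hvmeas
    have hAu : {x : ℝ | x ∈ Set.Ioo a b ∧ (0:ℝ) ≤ u' x} = Set.Ioo a b := by
      ext x; simp only [Set.mem_setOf_eq]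
      exact ⟨fun h => h.1, fun h => ⟨h, hu'nn x h⟩⟩
    have hN : volume ({x : ℝ | v' x ≠ g x} ∩ Set.Ioo a b) = 0 := by
      have := hgae
      rw [Filter.EventuallyEq, ae_iff, Measure.restrict_apply' measurableSet_Ioo] at this
      exact this
    have hAv : volume ({x : ℝ | 0 ≤ g x} ∩ Set.Ioo a b) = volume (Set.Ioo a b) := by
      have heq : volume ({x : ℝ | 0 ≤ g x} ∩ Set.Ioo a b)
          = volume {x : ℝ | x ∈ Set.Ioo a b ∧ (0:ℝ) ≤ v' x} := by
        apply measure_congr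
        rw [MeasureTheory.ae_eq_set]
        constructor
        · refine measure_mono_null ?_ hN
          rintro x ⟨⟨hgx, hx⟩, hnot⟩
          simp only [Set.mem_setOf_eq] at hnot ⊢
          refine ⟨fun h => hnot ⟨hx, h ▸ hgx⟩, hx⟩
        · refine measure_mono_null ?_ hN
          rintro x ⟨⟨hx, hvx⟩, hnot⟩
          simp only [Set.mem_inter_iff, Set.mem_setOf_eq] at hnot ⊢
          refine ⟨fun h => ?_, hx⟩
          exact (not_and.mp hnot) (h ▸ hvx) hx
      rw [heq, ← hlevel 0 le_rfl, hAu]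
    have hSmeas : MeasurableSet ({x : ℝ | 0 ≤ g x} ∩ Set.Ioo a b) :=
      (measurableSet_le measurable_const hgmeas.measurable).inter measurableSet_Ioo
    have hcompl : volume (Set.Ioo a b \ ({x : ℝ | 0 ≤ g x} ∩ Set.Ioo a b)) = 0 := by
      rw [measure_diff Set.inter_subset_right hSmeas.nullMeasurableSet
        (hAv ▸ measure_Ioo_lt_top.ne), hAv, tsub_self]
    have hg0 : 0 ≤ᵐ[volume.restrict (Set.Ioo a b)] g := by
      rw [Filter.EventuallyLE, ae_iff, Measure.restrict_apply' measurableSet_Ioo]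
      refine measure_mono_null ?_ hcompl
      rintro x ⟨hx, hxIoo⟩
      simp only [Pi.zero_apply, not_le] at hx
      refine ⟨hxIoo, fun hmem => ?_⟩
      have : (0:ℝ) ≤ g x := hmem.1
      exact (not_le.mpr hx) this
    filter_upwards [hgae, hg0] with x h1 h2
    rw [Pi.zero_apply] at h2 ⊢
    rw [h1]; exact h2
  -- total integrals are equal
  have hT : ∫ t in Set.Ioo a b, u' t = ∫ t in Set.Ioo a b, v' t := by
    have h1 : ∫ t in Set.Ioo a b, u' t = ∫ t in Set.Ioo a b, max (u' t - 0) 0 := by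
      refine (setIntegral_congr_fun measurableSet_Ioo fun t ht => ?_).symm
      rw [sub_zero, max_eq_left (hu'nn t ht)]
    have h2 : ∫ t in Set.Ioo a b, v' t = ∫ t in Set.Ioo a b, max (v' t - 0) 0 := by
      apply integral_congr_ae
      filter_upwards [hv'nn] with t ht
      have ht' : (0:ℝ) ≤ v' t := ht
      rw [sub_zero, max_eq_left ht']
    rw [h1, h2]
    exact aux_pospart_eq a b u' v' Iu Iv hlevel 0 le_rfl
  intro x hx
  rcases eq_or_lt_of_le hx.1 with hax | hax
  · rw [← hax]; exact huva.le
  -- now a < x ≤ b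
  have hsplit : ∀ f : ℝ → ℝ, IntegrableOn f (Set.Ioo a b) volume →
      ∫ t in Set.Ioo a b, f t = (∫ t in Set.Ioo a x, f t) + ∫ t in Set.Ioo x b, f t := by
    intro f hf
    have hunion : Set.Ioo a x ∪ Set.Ico x b = Set.Ioo a b := Set.Ioo_union_Ico_eq_Ioo hax hx.2
    have hdisj : Disjoint (Set.Ioo a x) (Set.Ico x b) :=
      Set.disjoint_left.mpr fun t ht ht' => absurd ht.2 (not_lt.mpr ht'.1)
    rw [← hunion, setIntegral_union hdisj measurableSet_Ico
      (hf.mono_set (hunion ▸ Set.subset_union_left))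
      (hf.mono_set (hunion ▸ Set.subset_union_right)), integral_Ico_eq_integral_Ioo]
  have hux : u x = u a + ∫ t in Set.Ioo a x, u' t := by
    rw [hu_ac x hx, intervalIntegral.integral_of_le hx.1,
      MeasureTheory.integral_Ioc_eq_integral_Ioo]
  have hvx : v x = v a + ∫ t in Set.Ioo a x, v' t := by
    rw [hv_ac x hx, intervalIntegral.integral_of_le hx.1,
      MeasureTheory.integral_Ioc_eq_integral_Ioo]
  -- key inequality on the right tail
  have hkey : ∫ t in Set.Ioo x b, v' t ≤ ∫ t in Set.Ioo x b, u' t := by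
    rcases eq_or_lt_of_le hx.2 with hxb | hxb
    · rw [hxb]; simp
    · set m := (x + b) / 2 with hm
      have hmmem : m ∈ Set.Ioo a b := ⟨by rw [hm]; linarith, by rw [hm]; linarith⟩
      have hbdd : BddAbove (u' '' Set.Ioo a x) := by
        refine ⟨u' m, ?_⟩
        rintro y ⟨s, hs, rfl⟩
        exact hu'_mono ⟨hs.1, hs.2.trans hxb⟩ hmmem (by rw [hm]; linarith [hs.2])
      have hne : (u' '' Set.Ioo a x).Nonempty := (Set.nonempty_Ioo.mpr hax).image _
      set ρ₀ := sSup (u' '' Set.Ioo a x) with hρ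
      have h1 : ∀ s ∈ Set.Ioo a x, u' s ≤ ρ₀ := fun s hs => le_csSup hbdd ⟨s, hs, rfl⟩
      have h2 : ∀ t ∈ Set.Ioo x b, ρ₀ ≤ u' t := by
        intro t ht
        refine csSup_le hne ?_
        rintro y ⟨s, hs, rfl⟩
        exact hu'_mono ⟨hs.1, hs.2.trans hxb⟩ ⟨hax.trans ht.1, ht.2⟩ (by linarith [hs.2, ht.1])
      have hρ0 : 0 ≤ ρ₀ := by
        have hmid : (a + x)/2 ∈ Set.Ioo a x := ⟨by linarith, by linarith⟩
        exact le_trans (hu'nn _ ⟨hmid.1, hmid.2.trans hxb⟩) (h1 _ hmid)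
      have Iuxb : IntegrableOn u' (Set.Ioo x b) volume :=
        Iu.mono_set (Set.Ioo_subset_Ioo hax.le le_rfl)
      have Ivxb : IntegrableOn v' (Set.Ioo x b) volume :=
        Iv.mono_set (Set.Ioo_subset_Ioo hax.le le_rfl)
      have hconstab : IntegrableOn (fun _ : ℝ => ρ₀) (Set.Ioo a b) volume :=
        (integrableOn_const_iff).mpr (Or.inr measure_Ioo_lt_top)
      have hconstxb : IntegrableOn (fun _ : ℝ => ρ₀) (Set.Ioo x b) volume :=
        (integrableOn_const_iff).mpr (Or.inr measure_Ioo_lt_top)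
      have IFu : IntegrableOn (fun t => max (u' t - ρ₀) 0) (Set.Ioo a b) volume :=
        (Iu.sub hconstab).pos_part
      have IFv : IntegrableOn (fun t => max (v' t - ρ₀) 0) (Set.Ioo a b) volume :=
        (Iv.sub hconstab).pos_part
      have hbx : (0:ℝ) ≤ b - x := by linarith
      have c1 : ∫ t in Set.Ioo x b, v' t
          = (∫ t in Set.Ioo x b, (v' t - ρ₀)) + ρ₀ * (b - x) := by
        rw [integral_sub Ivxb hconstxb, setIntegral_const, Real.volume_real_Ioo,
          max_eq_left hbx, smul_eq_mul]
        ring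
      have c2 : ∫ t in Set.Ioo x b, (v' t - ρ₀) ≤ ∫ t in Set.Ioo x b, max (v' t - ρ₀) 0 :=
        setIntegral_mono_on (Ivxb.sub hconstxb)
          (IFv.mono_set (Set.Ioo_subset_Ioo hax.le le_rfl)) measurableSet_Ioo
          fun t _ => le_max_left _ _
      have c3 : ∫ t in Set.Ioo x b, max (v' t - ρ₀) 0
          ≤ ∫ t in Set.Ioo a b, max (v' t - ρ₀) 0 :=
        setIntegral_mono_set IFv (Filter.Eventually.of_forall fun t => le_max_right _ _)
          (HasSubset.Subset.eventuallyLE (Set.Ioo_subset_Ioo hax.le le_rfl))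
      have c4 := aux_pospart_eq a b u' v' Iu Iv hlevel ρ₀ hρ0
      have c5 : ∫ t in Set.Ioo a b, max (u' t - ρ₀) 0
          = ∫ t in Set.Ioo x b, max (u' t - ρ₀) 0 := by
        have hs := hsplit (fun t => max (u' t - ρ₀) 0) IFu
        have hz : ∫ t in Set.Ioo a x, max (u' t - ρ₀) 0 = 0 := by
          have heq : Set.EqOn (fun t => max (u' t - ρ₀) 0) (fun _ => (0:ℝ)) (Set.Ioo a x) :=
            fun t ht => max_eq_right (sub_nonpos.mpr (h1 t ht))
          rw [setIntegral_congr_fun measurableSet_Ioo heq, integral_zero]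
        rw [hs, hz, zero_add]
      have c6 : ∫ t in Set.Ioo x b, max (u' t - ρ₀) 0 = ∫ t in Set.Ioo x b, (u' t - ρ₀) :=
        setIntegral_congr_fun measurableSet_Ioo fun t ht => max_eq_left (sub_nonneg.mpr (h2 t ht))
      have c7 : ∫ t in Set.Ioo x b, (u' t - ρ₀)
          = (∫ t in Set.Ioo x b, u' t) - ρ₀ * (b - x) := by
        rw [integral_sub Iuxb hconstxb, setIntegral_const, Real.volume_real_Ioo,
          max_eq_left hbx, smul_eq_mul]
        ring
      linarith
  have su := hsplit u' Iu
  have sv := hsplit v' Iv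
  rw [hux, hvx, huva]
  linarith
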